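/- Let g_1(x; y), …, g_R(x; y) ∈ ℤ[x_1, …, x_{n_1}, y_1, …, y_{n_2}] be polynomials. If q, q' ∈ ℕ and gcd(q, q') = 1, then A(qq') = A(q) A(q'), where A(q) = Σ_{0 ≤ a < q, gcd(q, a_1, …, a_R) = 1} φ(q)^{−(n_1+n_2)} 𝒮_{a,q}. -/

import Mathlib

open MvPolynomial

/-- `e(t) = e^{2πit}`. -/
noncomputable def eChar (t : ℝ) : ℂ := Complex.exp (2 * Real.pi * Complex.I * t)

open scoped Classical in
/-- The complete exponential sum `𝒮_{a,q} = Σ_{k ∈ U_q^{n₁+n₂}} e(Σ_r g_r(k₁;k₂) a_r/q)`. -/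
noncomputable def expSumSaq {n₁ n₂ R : ℕ} (g : Fin R → MvPolynomial (Fin n₁ ⊕ Fin n₂) ℤ)
    (q : ℕ) (a : Fin R → ℕ) : ℂ :=
  ∑' k : Fin n₁ ⊕ Fin n₂ → ℕ,
    if ∀ v, k v < q ∧ Nat.Coprime (k v) q then
      eChar (((∑ r, eval (fun v => (k v : ℤ)) (g r) * (a r : ℤ) : ℤ) : ℝ) / (q : ℝ))
    else 0

open scoped Classical in
/-- `A(q) = Σ_{0 ≤ a < q, gcd(q,a)=1} φ(q)^{−(n₁+n₂)} 𝒮_{a,q}`. -/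
noncomputable def Aq {n₁ n₂ R : ℕ} (g : Fin R → MvPolynomial (Fin n₁ ⊕ Fin n₂) ℤ)
    (q : ℕ) : ℂ :=
  ∑' a : Fin R → ℕ,
    if (∀ r, a r < q) ∧ Nat.gcd q (Finset.univ.gcd a) = 1 then
      ((Nat.totient q : ℂ) ^ (n₁ + n₂))⁻¹ * expSumSaq g q a
    else 0

/-! ### Auxiliary material -/

section Aux

open Finset

private lemma eChar_add (x y : ℝ) : eChar (x + y) = eChar x * eChar y := by
  rw [eChar, eChar, eChar, ← Complex.exp_add]
  congr 1
  push_cast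
  ring

private lemma eChar_intCast (n : ℤ) : eChar (n : ℝ) = 1 := by
  rw [eChar]
  rw [show (2 * (Real.pi : ℂ) * Complex.I * ((n : ℝ) : ℂ)) = (n : ℂ) * (2 * Real.pi * Complex.I) by push_cast; ring]
  exact Complex.exp_int_mul_two_pi_mul_I n

private lemma eChar_div_congr {q : ℕ} (hq : 0 < q) {x y : ℤ}
    (h : ((x : ZMod q) = (y : ZMod q))) : eChar ((x : ℝ) / q) = eChar ((y : ℝ) / q) := by
  obtain ⟨c, hc⟩ := ((ZMod.intCast_eq_intCast_iff x y q).1 h).dvd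
  have hq0 : (q : ℝ) ≠ 0 := by positivity
  have hx : (x : ℝ) / q = (y : ℝ) / q + ((-c : ℤ) : ℝ) := by
    have : (x : ℝ) = y - q * c := by
      have : (y : ℝ) - x = q * c := by exact_mod_cast congrArg (Int.cast : ℤ → ℝ) hc
      linarith
    rw [this]
    push_cast
    field_simp
    ring
  rw [hx, eChar_add, eChar_intCast, mul_one]

/-- `natMod y M` is the representative of `y` mod `M` in `[0, M)`. -/
private def natMod (y : ℤ) (M : ℕ) : ℕ := (y % (M : ℤ)).toNat

private lemma natMod_lt {M : ℕ} (hM : 0 < M) (y : ℤ) : natMod y M < M := by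
  have h1 : y % (M : ℤ) < M := Int.emod_lt_of_pos _ (by exact_mod_cast hM)
  have h2 : 0 ≤ y % (M : ℤ) := Int.emod_nonneg _ (by exact_mod_cast hM.ne')
  unfold natMod
  omega

private lemma natMod_coe {M : ℕ} (hM : 0 < M) (y : ℤ) : ((natMod y M : ℕ) : ℤ) = y % M :=
  Int.toNat_of_nonneg (Int.emod_nonneg _ (by exact_mod_cast hM.ne'))

private lemma natMod_castZMod {M q : ℕ} (hM : 0 < M) (hdvd : q ∣ M) (y : ℤ) :
    ((natMod y M : ℕ) : ZMod q) = (y : ZMod q) := by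
  have h : (((natMod y M : ℕ) : ℤ) : ZMod q) = (y : ZMod q) := by
    rw [natMod_coe hM, ZMod.intCast_eq_intCast_iff]
    show (y % (M : ℤ)) % (q : ℤ) = y % (q : ℤ)
    exact Int.emod_emod_of_dvd y (by exact_mod_cast hdvd)
  simpa using h

private lemma natMod_castZMod' (M : ℕ) {q : ℕ} (hq : 0 < q) (x : ℤ) :
    ((natMod x q : ℕ) : ZMod M)
      = (x : ZMod M) - (q : ZMod M) * ((x / (q : ℤ) : ℤ) : ZMod M) := by
  have h : ((natMod x q : ℕ) : ℤ) = x - q * (x / (q : ℤ)) := by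
    rw [natMod_coe hq, Int.emod_def]
  calc ((natMod x q : ℕ) : ZMod M) = (((natMod x q : ℕ) : ℤ) : ZMod M) := by push_cast; rfl
    _ = _ := by rw [h]; push_cast; ring

private lemma nat_eq_of_cast_eq {M x y : ℕ} (hx : x < M) (hy : y < M)
    (h : (x : ZMod M) = (y : ZMod M)) : x = y :=
  Nat.ModEq.eq_of_lt_of_lt ((ZMod.natCast_eq_natCast_iff _ _ _).1 h) hx hy

private lemma coprime_mod_iff (k q : ℕ) : Nat.Coprime (k % q) q ↔ Nat.Coprime k q := by
  rw [Nat.Coprime, Nat.Coprime, ← Nat.gcd_rec, Nat.gcd_comm]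

private lemma cast_eval_eq {σ : Type*} (q : ℕ) (p : MvPolynomial σ ℤ) (f f' : σ → ℤ)
    (h : ∀ v, ((f v : ZMod q)) = (f' v : ZMod q)) :
    ((eval f p : ℤ) : ZMod q) = ((eval f' p : ℤ) : ZMod q) := by
  have key : ∀ f : σ → ℤ, ((eval f p : ℤ) : ZMod q)
      = eval₂ (Int.castRingHom (ZMod q)) (fun v => ((f v : ℤ) : ZMod q)) p := by
    intro f
    have h1 : eval f p = eval₂ (RingHom.id ℤ) f p := rfl
    have h2 : ((eval₂ (RingHom.id ℤ) f p : ℤ) : ZMod q)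
        = (Int.castRingHom (ZMod q)) (eval₂ (RingHom.id ℤ) f p) := rfl
    rw [h1, h2, eval₂_comp_left, RingHom.comp_id]
    rfl
  rw [key, key]
  congr 1
  funext v
  exact h v

end Aux

section Main

open Finset

variable {n₁ n₂ R : ℕ}

open scoped Classical in
private noncomputable def Tq (g : Fin R → MvPolynomial (Fin n₁ ⊕ Fin n₂) ℤ)
    (q : ℕ) (a : Fin R → ℕ) : ℂ :=
  ∑ k ∈ Fintype.piFinset (fun _ : Fin n₁ ⊕ Fin n₂ => Finset.range q),
    if ∀ v, Nat.Coprime (k v) q then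
      eChar (((∑ r, eval (fun v => (k v : ℤ)) (g r) * (a r : ℤ) : ℤ) : ℝ) / (q : ℝ))
    else 0

open scoped Classical in
private noncomputable def Bq (g : Fin R → MvPolynomial (Fin n₁ ⊕ Fin n₂) ℤ)
    (q : ℕ) : ℂ :=
  ∑ a ∈ Fintype.piFinset (fun _ : Fin R => Finset.range q),
    if Nat.gcd q (Finset.univ.gcd a) = 1 then Tq g q a else 0

private lemma expSum_eq (g : Fin R → MvPolynomial (Fin n₁ ⊕ Fin n₂) ℤ) (q : ℕ)
    (a : Fin R → ℕ) : expSumSaq g q a = Tq g q a := by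
  classical
  unfold expSumSaq Tq
  rw [tsum_eq_sum (s := Fintype.piFinset fun _ : Fin n₁ ⊕ Fin n₂ => Finset.range q) ?_]
  · refine Finset.sum_congr rfl fun k hk => ?_
    simp only [Fintype.mem_piFinset, Finset.mem_range] at hk
    by_cases h : ∀ v, Nat.Coprime (k v) q
    · rw [if_pos h, if_pos (fun v => ⟨hk v, h v⟩)]
    · rw [if_neg (fun hall => h fun v => (hall v).2), if_neg h]
  · intro k hk
    rw [if_neg]
    intro hall
    exact hk (by simp only [Fintype.mem_piFinset, Finset.mem_range]; exact fun v => (hall v).1)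

private lemma Aq_eq (g : Fin R → MvPolynomial (Fin n₁ ⊕ Fin n₂) ℤ) (q : ℕ) :
    Aq g q = ((Nat.totient q : ℂ) ^ (n₁ + n₂))⁻¹ * Bq g q := by
  classical
  unfold Aq Bq
  rw [tsum_eq_sum (s := Fintype.piFinset fun _ : Fin R => Finset.range q) ?_, Finset.mul_sum]
  · refine Finset.sum_congr rfl fun a ha => ?_
    simp only [Fintype.mem_piFinset, Finset.mem_range] at ha
    by_cases h : Nat.gcd q (Finset.univ.gcd a) = 1
    · rw [if_pos ⟨ha, h⟩, if_pos h, expSum_eq]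
    · rw [if_neg (fun hc => h hc.2), if_neg h, mul_zero]
  · intro a ha
    rw [if_neg]
    intro hc
    exact ha (by simp only [Fintype.mem_piFinset, Finset.mem_range]; exact hc.1)


private lemma echar_split (q q' : ℕ) (hq : 0 < q) (hq' : 0 < q') (s t : ℤ)
    (hst : (q : ℤ) * s + (q' : ℤ) * t = 1) (M : ℤ) :
    eChar ((M : ℝ) / ((q * q' : ℕ) : ℝ))
      = eChar (((M * t : ℤ) : ℝ) / q) * eChar (((M * s : ℤ) : ℝ) / q') := by
  rw [← eChar_add]
  congr 1
  have hstR : (q : ℝ) * s + (q' : ℝ) * t = 1 := by exact_mod_cast hst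
  have hq0 : (q : ℝ) ≠ 0 := by positivity
  have hq'0 : (q' : ℝ) ≠ 0 := by positivity
  push_cast
  field_simp
  linear_combination (-(M : ℝ)) * hstR

private lemma gcd_twist_iff {R : ℕ} (q : ℕ) (hq : 0 < q) (t : ℤ) (ht : IsCoprime t (q : ℤ))
    (b : Fin R → ℕ) :
    Nat.gcd q (Finset.univ.gcd (fun r => natMod (t * (b r : ℤ)) q))
      = Nat.gcd q (Finset.univ.gcd b) := by
  set a : Fin R → ℕ := fun r => natMod (t * (b r : ℤ)) q with ha
  have hrep : ∀ r, (a r : ℤ) = t * (b r : ℤ) - q * ((t * (b r : ℤ)) / q) := by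
    intro r
    rw [ha]
    simp only
    rw [natMod_coe hq, Int.emod_def]
  have key : ∀ d : ℕ, d ∣ q → ((∀ r, d ∣ a r) ↔ (∀ r, d ∣ b r)) := by
    intro d hd
    have hdt : IsCoprime (d : ℤ) t :=
      (ht.of_isCoprime_of_dvd_right (Int.natCast_dvd_natCast.2 hd)).symm
    have hqd : (d : ℤ) ∣ (q : ℤ) := Int.natCast_dvd_natCast.2 hd
    constructor
    · intro h r
      have h1 : (d : ℤ) ∣ (a r : ℤ) := Int.natCast_dvd_natCast.2 (h r)
      have h3 : (d : ℤ) ∣ t * (b r : ℤ) := by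
        have h4 : t * (b r : ℤ) = (a r : ℤ) + q * ((t * (b r : ℤ)) / q) := by
          rw [hrep r]; ring
        rw [h4]
        exact dvd_add h1 (hqd.mul_right _)
      exact Int.natCast_dvd_natCast.1 (hdt.dvd_of_dvd_mul_left h3)
    · intro h r
      have h3 : (d : ℤ) ∣ t * (b r : ℤ) := (Int.natCast_dvd_natCast.2 (h r)).mul_left t
      refine Int.natCast_dvd_natCast.1 ?_
      rw [hrep r]
      exact dvd_sub h3 (hqd.mul_right _)
  apply Nat.dvd_antisymm
  · refine Nat.dvd_gcd (Nat.gcd_dvd_left _ _) (Finset.dvd_gcd fun r _ => ?_)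
    exact (key _ (Nat.gcd_dvd_left _ _)).1
      (fun r' => (Nat.gcd_dvd_right q _).trans (Finset.gcd_dvd (Finset.mem_univ r'))) r
  · refine Nat.dvd_gcd (Nat.gcd_dvd_left _ _) (Finset.dvd_gcd fun r _ => ?_)
    exact (key _ (Nat.gcd_dvd_left _ _)).2
      (fun r' => (Nat.gcd_dvd_right q _).trans (Finset.gcd_dvd (Finset.mem_univ r'))) r

variable {n₁ n₂ R : ℕ}

private lemma Tq_mul (g : Fin R → MvPolynomial (Fin n₁ ⊕ Fin n₂) ℤ)
    (q q' : ℕ) (hq : 0 < q) (hq' : 0 < q') (s t : ℤ)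
    (hst : (q : ℤ) * s + (q' : ℤ) * t = 1) (b : Fin R → ℕ) :
    Tq g (q * q') b
      = Tq g q (fun r => natMod (t * (b r : ℤ)) q)
        * Tq g q' (fun r => natMod (s * (b r : ℤ)) q') := by
  classical
  have hM : 0 < q * q' := Nat.mul_pos hq hq'
  have hB : (q : ZMod (q * q')) * (s : ZMod (q * q')) + (q' : ZMod (q * q')) * t = 1 := by
    have h := congrArg (Int.cast : ℤ → ZMod (q * q')) hst
    push_cast at h
    exact h
  have h0 : (q : ZMod (q * q')) * (q' : ZMod (q * q')) = 0 := by
    rw [← Nat.cast_mul]; exact ZMod.natCast_self _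
  have hq0 : (q : ZMod q) = 0 := ZMod.natCast_self q
  have hq'0 : (q' : ZMod q') = 0 := ZMod.natCast_self q'
  have h1 : (q' : ZMod q) * (t : ZMod q) = 1 := by
    have h := congrArg (Int.cast : ℤ → ZMod q) hst
    push_cast at h
    rw [hq0, zero_mul, zero_add] at h
    exact h
  have h1' : (q : ZMod q') * (s : ZMod q') = 1 := by
    have h := congrArg (Int.cast : ℤ → ZMod q') hst
    push_cast at h
    rw [hq'0, zero_mul, add_zero] at h
    exact h
  unfold Tq
  rw [Finset.sum_mul_sum, ← Finset.sum_product']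
  refine Finset.sum_nbij'
    (i := fun k => (fun v => k v % q, fun v => k v % q'))
    (j := fun p => fun v =>
      natMod ((q' : ℤ) * t * ((p.1 v : ℕ) : ℤ) + (q : ℤ) * s * ((p.2 v : ℕ) : ℤ)) (q * q'))
    ?_ ?_ ?_ ?_ ?_
  · intro k hk
    simp only [Finset.mem_product, Fintype.mem_piFinset, Finset.mem_range]
    exact ⟨fun v => Nat.mod_lt _ hq, fun v => Nat.mod_lt _ hq'⟩
  · intro p hp
    simp only [Fintype.mem_piFinset, Finset.mem_range]
    exact fun v => natMod_lt hM _
  · -- j (i k) = k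
    intro k hk
    dsimp only
    simp only [Fintype.mem_piFinset, Finset.mem_range] at hk
    funext v
    refine nat_eq_of_cast_eq (natMod_lt hM _) (hk v) ?_
    rw [natMod_castZMod hM dvd_rfl]
    push_cast
    rw [Int.emod_def, Int.emod_def]
    push_cast
    linear_combination ((k v : ZMod (q * q'))) * hB
      - ((t : ZMod (q * q')) * ((((k v : ℤ) / ((q : ℕ) : ℤ)) : ℤ) : ZMod (q * q'))
          + (s : ZMod (q * q')) * ((((k v : ℤ) / ((q' : ℕ) : ℤ)) : ℤ) : ZMod (q * q'))) * h0
  · -- i (j p) = p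
    intro p hp
    dsimp only
    simp only [Finset.mem_product, Fintype.mem_piFinset, Finset.mem_range] at hp
    obtain ⟨hp1, hp2⟩ := hp
    have hjq : ∀ v, ((natMod ((q' : ℤ) * t * ((p.1 v : ℕ) : ℤ) + (q : ℤ) * s * ((p.2 v : ℕ) : ℤ))
        (q * q') : ℕ) : ZMod q)
        = (q' : ZMod q) * t * (p.1 v : ZMod q) + (q : ZMod q) * s * (p.2 v : ZMod q) := by
      intro v
      rw [natMod_castZMod hM (dvd_mul_right q q')]
      push_cast
      ring
    have hjq' : ∀ v, ((natMod ((q' : ℤ) * t * ((p.1 v : ℕ) : ℤ) + (q : ℤ) * s * ((p.2 v : ℕ) : ℤ))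
        (q * q') : ℕ) : ZMod q')
        = (q' : ZMod q') * t * (p.1 v : ZMod q') + (q : ZMod q') * s * (p.2 v : ZMod q') := by
      intro v
      rw [natMod_castZMod hM (dvd_mul_left q' q)]
      push_cast
      ring
    refine Prod.ext (funext fun v => ?_) (funext fun v => ?_)
    · refine nat_eq_of_cast_eq (Nat.mod_lt _ hq) (hp1 v) ?_
      rw [ZMod.natCast_mod, hjq v]
      linear_combination ((p.1 v : ZMod q)) * h1 + ((s : ZMod q) * (p.2 v : ZMod q)) * hq0
    · refine nat_eq_of_cast_eq (Nat.mod_lt _ hq') (hp2 v) ?_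
      rw [ZMod.natCast_mod, hjq' v]
      linear_combination ((p.2 v : ZMod q')) * h1' + ((t : ZMod q') * (p.1 v : ZMod q')) * hq'0
  · -- summand equality
    intro k hk
    dsimp only
    have hcond : (∀ v, Nat.Coprime (k v) (q * q'))
        ↔ (∀ v, Nat.Coprime (k v % q) q) ∧ (∀ v, Nat.Coprime (k v % q') q') := by
      constructor
      · intro h
        exact ⟨fun v => (coprime_mod_iff _ _).2 ((Nat.coprime_mul_iff_right.1 (h v)).1),
          fun v => (coprime_mod_iff _ _).2 ((Nat.coprime_mul_iff_right.1 (h v)).2)⟩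
      · rintro ⟨ha, hb⟩ v
        exact Nat.coprime_mul_iff_right.2 ⟨(coprime_mod_iff _ _).1 (ha v),
          (coprime_mod_iff _ _).1 (hb v)⟩
    by_cases h : ∀ v, Nat.Coprime (k v) (q * q')
    · rw [if_pos h, if_pos (hcond.1 h).1, if_pos (hcond.1 h).2,
        echar_split q q' hq hq' s t hst]
      congr 1
      · refine eChar_div_congr hq ?_
        push_cast
        rw [Finset.sum_mul]
        refine Finset.sum_congr rfl fun r _ => ?_
        have he : (((eval (fun v => ((k v : ℕ) : ℤ)) (g r) : ℤ)) : ZMod q)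
            = (((eval (fun v => ((k v : ℤ) % ((q : ℕ) : ℤ))) (g r) : ℤ)) : ZMod q) :=
          cast_eval_eq q _ _ _ (fun v => by
            rw [ZMod.intCast_eq_intCast_iff]
            exact (Int.emod_emod_of_dvd _ dvd_rfl).symm)
        have ha : ((natMod (t * (b r : ℤ)) q : ℕ) : ZMod q)
            = (t : ZMod q) * ((b r : ℕ) : ZMod q) := by
          rw [natMod_castZMod hq dvd_rfl]; push_cast; ring
        rw [he, ha]
        ring
      · refine eChar_div_congr hq' ?_
        push_cast
        rw [Finset.sum_mul]
        refine Finset.sum_congr rfl fun r _ => ?_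
        have he : (((eval (fun v => ((k v : ℕ) : ℤ)) (g r) : ℤ)) : ZMod q')
            = (((eval (fun v => ((k v : ℤ) % ((q' : ℕ) : ℤ))) (g r) : ℤ)) : ZMod q') :=
          cast_eval_eq q' _ _ _ (fun v => by
            rw [ZMod.intCast_eq_intCast_iff]
            exact (Int.emod_emod_of_dvd _ dvd_rfl).symm)
        have ha : ((natMod (s * (b r : ℤ)) q' : ℕ) : ZMod q')
            = (s : ZMod q') * ((b r : ℕ) : ZMod q') := by
          rw [natMod_castZMod hq' dvd_rfl]; push_cast; ring
        rw [he, ha]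
        ring
    · rw [if_neg h]
      have hnc : ¬((∀ v, Nat.Coprime (k v % q) q) ∧ (∀ v, Nat.Coprime (k v % q') q')) :=
        fun hc => h (hcond.2 hc)
      rcases not_and_or.1 hnc with h' | h'
      · rw [if_neg h', zero_mul]
      · rw [if_neg h', mul_zero]

private lemma Bq_mul (g : Fin R → MvPolynomial (Fin n₁ ⊕ Fin n₂) ℤ)
    (q q' : ℕ) (hq : 0 < q) (hq' : 0 < q') (hco : Nat.Coprime q q') :
    Bq g (q * q') = Bq g q * Bq g q' := by
  classical
  obtain ⟨s, t, hst⟩ : ∃ s t : ℤ, (q : ℤ) * s + (q' : ℤ) * t = 1 := by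
    refine ⟨Nat.gcdA q q', Nat.gcdB q q', ?_⟩
    have h := Nat.gcd_eq_gcd_ab q q'
    rw [hco] at h
    push_cast at h
    linarith
  have hM : 0 < q * q' := Nat.mul_pos hq hq'
  have htq : IsCoprime t (q : ℤ) := ⟨(q' : ℤ), s, by linarith⟩
  have hsq' : IsCoprime s (q' : ℤ) := ⟨(q : ℤ), t, by linarith⟩
  have hB : (q : ZMod (q * q')) * (s : ZMod (q * q')) + (q' : ZMod (q * q')) * t = 1 := by
    have h := congrArg (Int.cast : ℤ → ZMod (q * q')) hst
    push_cast at h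
    exact h
  have h0 : (q : ZMod (q * q')) * (q' : ZMod (q * q')) = 0 := by
    rw [← Nat.cast_mul]; exact ZMod.natCast_self _
  have hq0 : (q : ZMod q) = 0 := ZMod.natCast_self q
  have hq'0 : (q' : ZMod q') = 0 := ZMod.natCast_self q'
  have h1 : (q' : ZMod q) * (t : ZMod q) = 1 := by
    have h := congrArg (Int.cast : ℤ → ZMod q) hst
    push_cast at h
    rw [hq0, zero_mul, zero_add] at h
    exact h
  have h1' : (q : ZMod q') * (s : ZMod q') = 1 := by
    have h := congrArg (Int.cast : ℤ → ZMod q') hst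
    push_cast at h
    rw [hq'0, zero_mul, add_zero] at h
    exact h
  unfold Bq
  rw [Finset.sum_mul_sum, ← Finset.sum_product']
  refine Finset.sum_nbij'
    (i := fun b => (fun r => natMod (t * ((b r : ℕ) : ℤ)) q,
      fun r => natMod (s * ((b r : ℕ) : ℤ)) q'))
    (j := fun p => fun r =>
      natMod ((q' : ℤ) ^ 2 * t * ((p.1 r : ℕ) : ℤ) + (q : ℤ) ^ 2 * s * ((p.2 r : ℕ) : ℤ)) (q * q'))
    ?_ ?_ ?_ ?_ ?_
  · intro b hb
    simp only [Finset.mem_product, Fintype.mem_piFinset, Finset.mem_range]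
    exact ⟨fun r => natMod_lt hq _, fun r => natMod_lt hq' _⟩
  · intro p hp
    simp only [Fintype.mem_piFinset, Finset.mem_range]
    exact fun r => natMod_lt hM _
  · -- j (i b) = b
    intro b hb
    dsimp only
    simp only [Fintype.mem_piFinset, Finset.mem_range] at hb
    funext r
    refine nat_eq_of_cast_eq (natMod_lt hM _) (hb r) ?_
    rw [natMod_castZMod hM dvd_rfl]
    push_cast
    rw [natMod_castZMod' (q * q') hq (t * ((b r : ℕ) : ℤ)),
      natMod_castZMod' (q * q') hq' (s * ((b r : ℕ) : ℤ))]
    push_cast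
    linear_combination (((b r : ℕ) : ZMod (q * q')) * ((q : ZMod (q * q')) * s
        + (q' : ZMod (q * q')) * t + 1)) * hB
      - (2 * ((b r : ℕ) : ZMod (q * q')) * s * t
          + (q' : ZMod (q * q')) * t * (((t * ((b r : ℕ) : ℤ)) / (q : ℤ) : ℤ) : ZMod (q * q'))
          + (q : ZMod (q * q')) * s * (((s * ((b r : ℕ) : ℤ)) / (q' : ℤ) : ℤ) : ZMod (q * q'))) * h0
  · -- i (j p) = p
    intro p hp
    dsimp only
    simp only [Finset.mem_product, Fintype.mem_piFinset, Finset.mem_range] at hp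
    obtain ⟨hp1, hp2⟩ := hp
    have hjq : ∀ r, ((natMod ((q' : ℤ) ^ 2 * t * ((p.1 r : ℕ) : ℤ)
        + (q : ℤ) ^ 2 * s * ((p.2 r : ℕ) : ℤ)) (q * q') : ℕ) : ZMod q)
        = (q' : ZMod q) ^ 2 * t * (p.1 r : ZMod q) + (q : ZMod q) ^ 2 * s * (p.2 r : ZMod q) := by
      intro r
      rw [natMod_castZMod hM (dvd_mul_right q q')]
      push_cast
      ring
    have hjq' : ∀ r, ((natMod ((q' : ℤ) ^ 2 * t * ((p.1 r : ℕ) : ℤ)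
        + (q : ℤ) ^ 2 * s * ((p.2 r : ℕ) : ℤ)) (q * q') : ℕ) : ZMod q')
        = (q' : ZMod q') ^ 2 * t * (p.1 r : ZMod q') + (q : ZMod q') ^ 2 * s * (p.2 r : ZMod q') := by
      intro r
      rw [natMod_castZMod hM (dvd_mul_left q' q)]
      push_cast
      ring
    refine Prod.ext (funext fun r => ?_) (funext fun r => ?_)
    · refine nat_eq_of_cast_eq (natMod_lt hq _) (hp1 r) ?_
      rw [natMod_castZMod hq dvd_rfl]
      push_cast
      rw [hjq r]
      linear_combination ((p.1 r : ZMod q) * ((q' : ZMod q) * t + 1)) * h1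
        + ((q : ZMod q) * s * t * (p.2 r : ZMod q)) * hq0
    · refine nat_eq_of_cast_eq (natMod_lt hq' _) (hp2 r) ?_
      rw [natMod_castZMod hq' dvd_rfl]
      push_cast
      rw [hjq' r]
      linear_combination ((p.2 r : ZMod q') * ((q : ZMod q') * s + 1)) * h1'
        + ((q' : ZMod q') * s * t * (p.1 r : ZMod q')) * hq'0
  · -- summand equality
    intro b hb
    dsimp only
    have hgcd1 : Nat.gcd q (Finset.univ.gcd (fun r => natMod (t * ((b r : ℕ) : ℤ)) q))
        = Nat.gcd q (Finset.univ.gcd b) := gcd_twist_iff q hq t htq b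
    have hgcd2 : Nat.gcd q' (Finset.univ.gcd (fun r => natMod (s * ((b r : ℕ) : ℤ)) q'))
        = Nat.gcd q' (Finset.univ.gcd b) := gcd_twist_iff q' hq' s hsq' b
    have hcond : Nat.gcd (q * q') (Finset.univ.gcd b) = 1
        ↔ Nat.gcd q (Finset.univ.gcd b) = 1 ∧ Nat.gcd q' (Finset.univ.gcd b) = 1 :=
      Nat.coprime_mul_iff_left
    by_cases h : Nat.gcd (q * q') (Finset.univ.gcd b) = 1
    · rw [if_pos h, if_pos (by rw [hgcd1]; exact (hcond.1 h).1),
        if_pos (by rw [hgcd2]; exact (hcond.1 h).2)]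
      exact Tq_mul g q q' hq hq' s t hst b
    · rw [if_neg h]
      rcases not_and_or.1 (fun hc => h (hcond.2 hc)) with h' | h'
      · rw [if_neg (by rw [hgcd1]; exact h'), zero_mul]
      · have h2 : ¬ Nat.gcd q' (Finset.univ.gcd (fun r => natMod (s * ((b r : ℕ) : ℤ)) q')) = 1 := by
          rw [hgcd2]; exact h'
        rw [if_neg h2, mul_zero]


end Main

/-- **Lemma (multiplicativity of A)**.  For `gcd(q, q') = 1` one has `A(qq') = A(q)A(q')`. -/
theorem Aq_multiplicative
    (n₁ n₂ R : ℕ)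
    (g : Fin R → MvPolynomial (Fin n₁ ⊕ Fin n₂) ℤ)
    (q q' : ℕ) (hq : 1 ≤ q) (hq' : 1 ≤ q') (hco : Nat.Coprime q q') :
    Aq g (q * q') = Aq g q * Aq g q' := by
  rw [Aq_eq, Aq_eq, Aq_eq, Bq_mul g q q' hq hq' hco, Nat.totient_mul hco]
  push_cast
  rw [mul_pow, mul_inv]
  ring
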